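/- Let d ≥ 1 be an integer. The union of the Kuhn simplices k(v,π), taken over all integer vectors v ∈ ℤ^d and all permutations π of {1,…,d}, equals all of ℝ^d. -/
import Mathlib


/-- The right `d`-simplex `S^α = {x ∈ ℝ^d : α ≥ x_1 ≥ x_2 ≥ … ≥ x_d ≥ 0}`
(coordinates indexed by `Fin d`, in order). -/
def Sset (d : ℕ) (α : ℝ) : Set (Fin d → ℝ) :=
  {x | (∀ i : Fin d, 0 ≤ x i ∧ x i ≤ α) ∧ ∀ i j : Fin d, i ≤ j → x j ≤ x i}

/-- The Kuhn simplex `k(v,π) = {x : 1 ≥ (x−v)_{π(1)} ≥ … ≥ (x−v)_{π(d)} ≥ 0}`. -/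
def kuhn (d : ℕ) (v : Fin d → ℝ) (π : Equiv.Perm (Fin d)) : Set (Fin d → ℝ) :=
  {x | (∀ i : Fin d, 0 ≤ x (π i) - v (π i) ∧ x (π i) - v (π i) ≤ 1) ∧
       ∀ i j : Fin d, i ≤ j → x (π j) - v (π j) ≤ x (π i) - v (π i)}

/-- `(v,π)` with `v ∈ ℤ^d` is admissible for `m` if `v ∈ S^{m-1}` and whenever
`v_j = v_{j+1}`, `j` precedes `j+1` in `π`, i.e. `π⁻¹(j) < π⁻¹(j+1)`. -/
def admissible (d m : ℕ) (v : Fin d → ℤ) (π : Equiv.Perm (Fin d)) : Prop :=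
  ((fun i => (v i : ℝ)) ∈ Sset d ((m : ℝ) - 1)) ∧
  ∀ (j : Fin d) (h : (j : ℕ) + 1 < d),
    v j = v ⟨(j : ℕ) + 1, h⟩ → π.symm j < π.symm ⟨(j : ℕ) + 1, h⟩

/-- the Kuhn simplices `k(v,π)`, over all integer vectors `v` and
permutations `π`, cover (indeed, their union equals) all of `ℝ^d`. -/
theorem iUnion_kuhn_eq_univ (d : ℕ) (hd : 1 ≤ d) :
    ⋃ (v : Fin d → ℤ) (π : Equiv.Perm (Fin d)),
      kuhn d (fun i => (v i : ℝ)) π = (Set.univ : Set (Fin d → ℝ)) := by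
  ext x
  simp only [Set.mem_iUnion, Set.mem_univ, iff_true]
  set f : Fin d → ℝ := fun i => x i - ⌊x i⌋
  refine ⟨fun i => ⌊x i⌋, (Fin.revPerm.trans (Tuple.sort f)), ?_, ?_⟩
  · intro i
    constructor
    · simpa [f] using Int.fract_nonneg (x _)
    · have := Int.fract_lt_one (x ((Tuple.sort f) (Fin.rev i)))
      simp only [Int.fract] at this
      simp only [Equiv.trans_apply, Fin.revPerm_apply]
      linarith
  · intro i j hij
    have := Tuple.monotone_sort f (show Fin.rev j ≤ Fin.rev i from Fin.rev_le_rev.mpr hij)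
    simpa [f, Equiv.trans_apply] using this
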